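/- For all t₁, t₂ ∈ [0,1/2] and x ∈ C, T(t₁)(T(t₂)x) = T(t₁+t₂)x. -/

import Mathlib

open Set

noncomputable section

/-- `Ω = {−1} ∪ [0,∞)`. -/
def Omega : Set ℝ := {-1} ∪ Set.Ici 0

/-- Membership in the set `C`: `x` takes values in `[0,1]` on `Ω`
and is 1-Lipschitz on `[0,∞)`. -/
def memC (x : ℝ → ℝ) : Prop :=
  (∀ u ∈ Omega, x u ∈ Set.Icc (0:ℝ) 1) ∧
  ∀ u₁ ∈ Set.Ici (0:ℝ), ∀ u₂ ∈ Set.Ici (0:ℝ), |x u₁ - x u₂| ≤ |u₁ - u₂|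

/-- `α_x(r) = sup { x s : s ∈ {−1} ∪ [r,∞) }`. -/
def alphaF (x : ℝ → ℝ) (r : ℝ) : ℝ := sSup (x '' ({-1} ∪ Set.Ici r))

/-- The semigroup map `T(t)` for `t ∈ [0,1]`:
`(T(t)x)(−1) = x(−1)`, `(T(t)x)(u) = x(u−t)` for `u ≥ t`, and for `0 ≤ u ≤ t`
the three-case definition via `α_x`. -/
def T (t : ℝ) (x : ℝ → ℝ) : ℝ → ℝ := fun u =>
  if u = -1 then x (-1)
  else if t ≤ u then x (u - t)
  else if 1 - alphaF x (1 - t + u) ≤ x 0 - t + u then x 0 - t + u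
  else if x 0 + t - u ≤ 1 - alphaF x (1 - t + u) then x 0 + t - u
  else 1 - alphaF x (1 - t + u)

/-- The supremum distance over `Ω`. -/
def supDist (x y : ℝ → ℝ) : ℝ := sSup ((fun u => |x u - y u|) '' Omega)

lemma T_shift {t u : ℝ} (x : ℝ → ℝ) (ht : 0 ≤ t) (hu : t ≤ u) : T t x u = x (u - t) := by
  unfold T
  rw [if_neg (by intro h; rw [h] at hu; linarith), if_pos hu]

lemma T_clamp {t u : ℝ} (x : ℝ → ℝ) (ht : 0 ≤ t) (hu : 0 ≤ u) (hut : u ≤ t) :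
    T t x u = max (x 0 - t + u) (min (1 - alphaF x (1 - t + u)) (x 0 + t - u)) := by
  rcases eq_or_lt_of_le hut with h | h
  · subst h
    rw [T_shift x ht le_rfl]
    simp only [sub_self]
    have h1 : x 0 - u + u = x 0 := by ring
    have h2 : x 0 + u - u = x 0 := by ring
    rw [h1, h2, max_eq_left (min_le_right _ _)]
  · unfold T
    rw [if_neg (by intro h'; rw [h'] at hu; linarith), if_neg (by linarith)]
    rcases le_or_gt (1 - alphaF x (1 - t + u)) (x 0 - t + u) with h1 | h1
    · rw [if_pos h1, max_eq_left (le_trans (min_le_left _ _) h1)]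
    · rw [if_neg (not_le.mpr h1)]
      rcases le_or_gt (x 0 + t - u) (1 - alphaF x (1 - t + u)) with h2 | h2
      · rw [if_pos h2, min_eq_right h2, max_eq_right (by linarith)]
      · rw [if_neg (not_le.mpr h2), min_eq_left h2.le, max_eq_right h1.le]

lemma alphaF_T {t r : ℝ} (x : ℝ → ℝ) (ht : 0 ≤ t) (htr : t ≤ r) :
    alphaF (T t x) r = alphaF x (r - t) := by
  unfold alphaF
  congr 1
  ext v
  constructor
  · rintro ⟨s, hs, rfl⟩
    rcases hs with hs | hs
    · refine ⟨-1, Or.inl rfl, ?_⟩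
      simp only [mem_singleton_iff] at hs; subst hs
      unfold T; rw [if_pos rfl]
    · have hs' : t ≤ s := le_trans htr hs
      refine ⟨s - t, Or.inr (by simp only [mem_Ici] at hs ⊢; linarith), ?_⟩
      rw [T_shift x ht hs']
  · rintro ⟨w, hw, rfl⟩
    rcases hw with hw | hw
    · simp only [mem_singleton_iff] at hw; subst hw
      refine ⟨-1, Or.inl rfl, ?_⟩
      unfold T; rw [if_pos rfl]
    · simp only [mem_Ici] at hw
      refine ⟨w + t, Or.inr (by simp only [mem_Ici]; linarith), ?_⟩
      rw [T_shift x ht (by linarith)]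
      congr 1; ring

lemma alphaF_bdd {x : ℝ → ℝ} (hx : memC x) {r : ℝ} (hr : 0 ≤ r) :
    BddAbove (x '' ({-1} ∪ Set.Ici r)) := by
  refine ⟨1, ?_⟩
  rintro v ⟨s, hs, rfl⟩
  exact (hx.1 s (hs.imp id (fun h => le_trans hr h))).2

lemma alphaF_ne (x : ℝ → ℝ) (r : ℝ) : (x '' ({-1} ∪ Set.Ici r)).Nonempty :=
  ⟨x (-1), ⟨-1, Or.inl rfl, rfl⟩⟩

lemma alphaF_mono {x : ℝ → ℝ} (hx : memC x) {r₁ r₂ : ℝ} (h0 : 0 ≤ r₁) (h : r₁ ≤ r₂) :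
    alphaF x r₂ ≤ alphaF x r₁ :=
  csSup_le_csSup (alphaF_bdd hx h0) (alphaF_ne x r₂)
    (Set.image_mono (Set.union_subset_union_right _ (Set.Ici_subset_Ici.mpr h)))

lemma alphaF_lip {x : ℝ → ℝ} (hx : memC x) {r₁ r₂ : ℝ} (h0 : 0 ≤ r₁) (h : r₁ ≤ r₂) :
    alphaF x r₁ ≤ alphaF x r₂ + (r₂ - r₁) := by
  apply csSup_le (alphaF_ne x r₁)
  rintro v ⟨s, hs, rfl⟩
  have hb := alphaF_bdd hx (le_trans h0 h)
  rcases hs with hs | hs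
  · simp only [mem_singleton_iff] at hs; subst hs
    have : x (-1) ≤ alphaF x r₂ := le_csSup hb ⟨-1, Or.inl rfl, rfl⟩
    linarith
  · simp only [mem_Ici] at hs
    rcases le_or_gt r₂ s with h2 | h2
    · have : x s ≤ alphaF x r₂ := le_csSup hb ⟨s, Or.inr h2, rfl⟩
      linarith
    · have hxr : x r₂ ≤ alphaF x r₂ := le_csSup hb ⟨r₂, Or.inr Set.self_mem_Ici, rfl⟩
      have hl := hx.2 s (le_trans h0 hs) r₂ (le_trans h0 h)
      have h1 : x s - x r₂ ≤ |x s - x r₂| := le_abs_self _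
      have h2' : |s - r₂| = r₂ - s := by rw [abs_of_nonpos (by linarith)]; ring
      rw [h2'] at hl
      linarith

lemma key_clamp (a b x0 t s : ℝ) (hs : 0 ≤ s) (ht : 0 ≤ t) (hab : a ≤ b) (hba : b ≤ a + s) :
    max (max (x0 - t) (min b (x0 + t)) - s) (min a (max (x0 - t) (min b (x0 + t)) + s)) =
      max (x0 - t - s) (min a (x0 + t + s)) := by
  simp only [max_def, min_def]
  split_ifs <;> linarith

/-- for `t₁, t₂ ∈ [0,1/2]` and `x ∈ C`,
`T(t₁)(T(t₂)x) = T(t₁+t₂)x` (as functions on `Ω`). -/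
theorem stmt_9 (t₁ t₂ : ℝ) (ht₁ : t₁ ∈ Set.Icc (0:ℝ) (1/2)) (ht₂ : t₂ ∈ Set.Icc (0:ℝ) (1/2))
    (x : ℝ → ℝ) (hx : memC x) :
    ∀ u ∈ Omega, T t₁ (T t₂ x) u = T (t₁ + t₂) x u := by

  obtain ⟨h10, h11⟩ := ht₁
  obtain ⟨h20, h21⟩ := ht₂
  intro u hu
  rcases hu with hu | hu
  · simp only [mem_singleton_iff] at hu; subst hu
    unfold T; simp
  · simp only [mem_Ici] at hu
    rcases le_or_gt (t₁ + t₂) u with h | h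
    · rw [T_shift _ h10 (by linarith), T_shift x h20 (by linarith),
        T_shift x (by linarith) h]
      congr 1; ring
    · rcases le_or_gt t₁ u with h2 | h2
      · -- t₁ ≤ u < t₁ + t₂
        rw [T_shift _ h10 h2, T_clamp x h20 (by linarith) (by linarith),
          T_clamp x (by linarith) hu h.le]
        have e1 : 1 - t₂ + (u - t₁) = 1 - (t₁ + t₂) + u := by ring
        have e2 : x 0 - t₂ + (u - t₁) = x 0 - (t₁ + t₂) + u := by ring
        have e3 : x 0 + t₂ - (u - t₁) = x 0 + (t₁ + t₂) - u := by ring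
        rw [e1, e2, e3]
      · -- u < t₁
        rw [T_clamp _ h10 hu h2.le, T_clamp x (by linarith) hu h.le,
          T_clamp x h20 le_rfl h20, alphaF_T x h20 (by linarith)]
        have e1 : 1 - t₁ + u - t₂ = 1 - (t₁ + t₂) + u := by ring
        have e2 : x 0 - t₂ + 0 = x 0 - t₂ := by ring
        have e3 : x 0 + t₂ - 0 = x 0 + t₂ := by ring
        have e4 : (1:ℝ) - t₂ + 0 = 1 - t₂ := by ring
        rw [e1, e2, e3, e4]
        set a := 1 - alphaF x (1 - (t₁ + t₂) + u) with ha
        set b := 1 - alphaF x (1 - t₂) with hb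
        have hab : a ≤ b := by
          have := alphaF_mono hx (r₁ := 1 - (t₁ + t₂) + u) (r₂ := 1 - t₂) (by linarith) (by linarith)
          simp only [ha, hb]; linarith
        have hba : b ≤ a + (t₁ - u) := by
          have := alphaF_lip hx (r₁ := 1 - (t₁ + t₂) + u) (r₂ := 1 - t₂) (by linarith) (by linarith)
          simp only [ha, hb]; linarith
        have := key_clamp a b (x 0) t₂ (t₁ - u) (by linarith) h20 hab hba
        calc max (max (x 0 - t₂) (min b (x 0 + t₂)) - t₁ + u)
              (min a (max (x 0 - t₂) (min b (x 0 + t₂)) + t₁ - u))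
            = max (max (x 0 - t₂) (min b (x 0 + t₂)) - (t₁ - u))
              (min a (max (x 0 - t₂) (min b (x 0 + t₂)) + (t₁ - u))) := by
              congr 1 <;> [skip; congr 1] <;> ring
          _ = max (x 0 - t₂ - (t₁ - u)) (min a (x 0 + t₂ + (t₁ - u))) := this
          _ = max (x 0 - (t₁ + t₂) + u) (min a (x 0 + (t₁ + t₂) - u)) := by
              congr 1 <;> [skip; congr 1] <;> ring
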